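/- Let alpha in F_{q^{mn}} with F_{q^{mn}} = F_q(alpha), mn > 1. If beta = (a*alpha + b)/(c*alpha + d) for some matrix [[a,b],[c,d]] in GL_2(F_q), then F_{q^{mn}} = F_q(beta) and the number of m-dimensional alpha-splitting subspaces equals the number of m-dimensional beta-splitting subspaces. -/

import Mathlib

open Pointwise IntermediateField

/-- `W` is a `γ`-splitting subspace: the whole space is the internal direct sum
`W ⊕ γW ⊕ ⋯ ⊕ γ^(n-1)W`. -/
def IsSplitting {F E : Type*} [Field F] [Field E] [Algebra F E]
    (n : ℕ) (α : E) (W : Submodule F E) : Prop :=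
  DirectSum.IsInternal (fun i : Fin n => α ^ (i : ℕ) • W)

section Aux

variable {F E : Type*} [Field F] [Field E] [Algebra F E]

lemma smul_submodule_eq_map (γ : E) (W : Submodule F E) :
    γ • W = W.map (LinearMap.mulLeft F γ) := by
  rfl

lemma finrank_smul_eq {γ : E} (hγ : γ ≠ 0) (W : Submodule F E) :
    Module.finrank F (γ • W : Submodule F E) = Module.finrank F W := by
  rw [smul_submodule_eq_map]
  have hinj : Function.Injective (LinearMap.mulLeft F γ) := by
    intro x y hxy
    simpa using mul_left_cancel₀ hγ hxy
  exact (LinearEquiv.finrank_eq (Submodule.equivMapOfInjective _ hinj W)).symm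

lemma smul_top_eq {γ : E} (hγ : γ ≠ 0) : γ • (⊤ : Submodule F E) = ⊤ := by
  rw [smul_submodule_eq_map, Submodule.map_top, LinearMap.range_eq_top]
  intro x
  exact ⟨γ⁻¹ * x, by rw [LinearMap.mulLeft_apply, mul_inv_cancel_left₀ hγ]⟩

lemma smul_iSup' {ι : Sort*} (γ : E) (p : ι → Submodule F E) :
    γ • (⨆ i, p i) = ⨆ i, γ • p i := by
  simp_rw [smul_submodule_eq_map, Submodule.map_iSup]

lemma indep_of_iSup_eq_top {n m : ℕ} [FiniteDimensional F E]
    (hdim : Module.finrank F E = m * n) (Wi : Fin n → Submodule F E)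
    (hr : ∀ i, Module.finrank F (Wi i) = m)
    (h : iSup Wi = ⊤) : iSupIndep Wi := by
  apply iSupIndep_of_dfinsupp_lsum_injective
  have hsurj : Function.Surjective (DFinsupp.lsum ℕ fun i => (Wi i).subtype) := by
    rw [← LinearMap.range_eq_top, ← Submodule.iSup_eq_range_dfinsupp_lsum]
    exact h
  letI e := DirectSum.linearEquivFunOnFintype F (Fin n) (fun i => ↥(Wi i))
  haveI : Module.Finite F (Π₀ i, Wi i) := Module.Finite.equiv e.symm
  have hfr : Module.finrank F (Π₀ i, Wi i) = Module.finrank F E := by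
    refine Eq.trans e.finrank_eq ?_
    rw [Module.finrank_pi_fintype, hdim]
    simp [hr, mul_comm]
  exact (LinearMap.injective_iff_surjective_of_finrank_eq_finrank (K := F) (V := Π₀ i, Wi i)
    (V₂ := E) hfr).mpr hsurj

lemma isSplitting_iff_iSup_eq_top {n m : ℕ} [FiniteDimensional F E]
    (hdim : Module.finrank F E = m * n) {γ : E} (hγ : γ ≠ 0)
    {W : Submodule F E} (hW : Module.finrank F W = m) :
    IsSplitting n γ W ↔ (⨆ i : Fin n, γ ^ (i : ℕ) • W) = ⊤ := by
  constructor
  · exact fun h => h.submodule_iSup_eq_top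
  · intro h
    refine DirectSum.isInternal_submodule_of_iSupIndep_of_iSup_eq_top ?_ h
    refine indep_of_iSup_eq_top hdim _ (fun i => ?_) h
    rw [finrank_smul_eq (pow_ne_zero _ hγ), hW]

lemma iSup_affine_le (n : ℕ) (α : E) (W : Submodule F E) (u v : F) :
    (⨆ i : Fin n, (algebraMap F E u * α + algebraMap F E v) ^ (i : ℕ) • W)
      ≤ ⨆ i : Fin n, α ^ (i : ℕ) • W := by
  refine iSup_le fun i => ?_
  intro x hx
  rw [smul_submodule_eq_map, Submodule.mem_map] at hx
  obtain ⟨w, hw, rfl⟩ := hx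
  rw [LinearMap.mulLeft_apply, add_pow, Finset.sum_mul]
  refine Submodule.sum_mem _ fun j hj => ?_
  rw [Finset.mem_range] at hj
  have hj' : j < n := lt_of_lt_of_le hj i.2
  have : (algebraMap F E u * α) ^ j * algebraMap F E v ^ ((i : ℕ) - j)
      * ((i : ℕ).choose j : E) * w
      = (u ^ j * v ^ ((i : ℕ) - j) * ((i : ℕ).choose j : F)) • (α ^ j * w) := by
    rw [Algebra.smul_def]
    push_cast
    ring
  rw [this]
  refine Submodule.smul_mem _ _ ?_
  refine le_iSup (fun i : Fin n => α ^ (i : ℕ) • W) (⟨j, hj'⟩ : Fin n) ?_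
  exact Submodule.smul_mem_pointwise_smul w (α ^ j) W hw

lemma iSup_affine_eq (n : ℕ) (α : E) (W : Submodule F E) (u v : F) (hu : u ≠ 0) :
    (⨆ i : Fin n, (algebraMap F E u * α + algebraMap F E v) ^ (i : ℕ) • W)
      = ⨆ i : Fin n, α ^ (i : ℕ) • W := by
  refine le_antisymm (iSup_affine_le n α W u v) ?_
  have hu' : algebraMap F E u ≠ 0 := by
    simpa using (algebraMap F E).injective.ne hu
  have hβ : α = algebraMap F E u⁻¹ * (algebraMap F E u * α + algebraMap F E v)
      + algebraMap F E (-(v / u)) := by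
    rw [map_inv₀, map_neg, map_div₀]
    field_simp
    ring
  calc (⨆ i : Fin n, α ^ (i : ℕ) • W)
      = ⨆ i : Fin n, (algebraMap F E u⁻¹ *
          (algebraMap F E u * α + algebraMap F E v) + algebraMap F E (-(v / u))) ^ (i : ℕ) • W := by
        rw [← hβ]
    _ ≤ _ := iSup_affine_le n _ W u⁻¹ (-(v / u))

lemma iSup_inv_top_iff (n : ℕ) {α : E} (hα : α ≠ 0) (W : Submodule F E) :
    (⨆ i : Fin n, α ^ (i : ℕ) • W) = ⊤ ↔ (⨆ i : Fin n, (α⁻¹) ^ (i : ℕ) • W) = ⊤ := by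
  have key : α ^ (n - 1) • (⨆ i : Fin n, (α⁻¹) ^ (i : ℕ) • W)
      = ⨆ i : Fin n, α ^ (i : ℕ) • W := by
    rw [smul_iSup']
    have h1 : ∀ i : Fin n, α ^ (n - 1) • (α⁻¹) ^ (i : ℕ) • W
        = α ^ (n - 1 - (i : ℕ)) • W := by
      intro i
      rw [smul_smul, inv_pow, ← pow_sub₀ _ hα (by omega : (i:ℕ) ≤ n-1)]
    simp_rw [h1]
    refine le_antisymm (iSup_le fun i => ?_) (iSup_le fun i => ?_)
    · exact le_iSup_of_le (⟨n - 1 - (i : ℕ), by omega⟩ : Fin n) le_rfl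
    · exact le_iSup_of_le (⟨n - 1 - (i : ℕ), by omega⟩ : Fin n)
        (by rw [show n - 1 - (n - 1 - (i : ℕ)) = (i : ℕ) by omega])
  have hinv : (⨆ i : Fin n, (α⁻¹) ^ (i : ℕ) • W)
      = (α ^ (n - 1))⁻¹ • (⨆ i : Fin n, α ^ (i : ℕ) • W) := by
    rw [← key, smul_smul, inv_mul_cancel₀ (pow_ne_zero _ hα), one_smul]
  constructor
  · intro h
    rw [hinv, h, smul_top_eq (inv_ne_zero (pow_ne_zero _ hα))]
  · intro h
    rw [← key, h, smul_top_eq (pow_ne_zero _ hα)]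

end Aux

theorem stmt17 (F E : Type*) [Field F] [Fintype F] [Field E] [Algebra F E]
    (m n : ℕ) (hm : 0 < m) (hn : 0 < n) (hmn : 1 < m * n)
    (hdim : Module.finrank F E = m * n)
    (α : E) (hα : Algebra.adjoin F {α} = ⊤)
    (a b c d : F) (habcd : a * d - b * c ≠ 0) (β : E)
    (hβ : β = (algebraMap F E a * α + algebraMap F E b) /
              (algebraMap F E c * α + algebraMap F E d)) :
    Algebra.adjoin F {β} = ⊤ ∧
    Nat.card {W : Submodule F E // Module.finrank F W = m ∧ IsSplitting n α W} =
      Nat.card {W : Submodule F E // Module.finrank F W = m ∧ IsSplitting n β W} := by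
  haveI : FiniteDimensional F E := FiniteDimensional.of_finrank_pos (by rw [hdim]; omega)
  have hbot : (⊥ : Subalgebra F E) ≠ ⊤ := by
    intro hb
    have := Subalgebra.bot_eq_top_iff_finrank_eq_one.mp hb
    omega
  have hlin : ∀ u v : F, (u ≠ 0 ∨ v ≠ 0) → algebraMap F E u * α + algebraMap F E v ≠ 0 := by
    intro u v huv h0
    by_cases hu : u = 0
    · rcases huv with h | h
      · exact h hu
      · subst hu
        simp only [map_zero, zero_mul, zero_add] at h0
        exact h ((algebraMap F E).injective (by simpa using h0))
    · have hu' : algebraMap F E u ≠ 0 := by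
        simpa using (algebraMap F E).injective.ne hu
      have hαv : α = algebraMap F E (-(v / u)) := by
        rw [map_neg, map_div₀]
        field_simp
        linear_combination h0
      have hle : Algebra.adjoin F {α} ≤ ⊥ := by
        refine Algebra.adjoin_le ?_
        rw [Set.singleton_subset_iff, hαv]
        exact Subalgebra.algebraMap_mem _ _
      exact hbot (le_antisymm bot_le (hα ▸ hle))
  have hden : algebraMap F E c * α + algebraMap F E d ≠ 0 := by
    refine hlin c d ?_
    by_contra h
    push_neg at h
    apply habcd
    rw [h.1, h.2]; ring
  have hnum : algebraMap F E a * α + algebraMap F E b ≠ 0 := by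
    refine hlin a b ?_
    by_contra h
    push_neg at h
    apply habcd
    rw [h.1, h.2]; ring
  have hβ0 : β ≠ 0 := by rw [hβ]; exact div_ne_zero hnum hden
  have hα0 : α ≠ 0 := by
    have := hlin 1 0 (Or.inl one_ne_zero)
    simpa using this
  have hrel : β * (algebraMap F E c * α + algebraMap F E d)
      = algebraMap F E a * α + algebraMap F E b := by
    rw [hβ, div_mul_cancel₀ _ hden]
  have h1 : α * (algebraMap F E c * β - algebraMap F E a)
      = algebraMap F E b - algebraMap F E d * β := by
    linear_combination hrel
  have hcβa : algebraMap F E c * β - algebraMap F E a ≠ 0 := by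
    intro h0
    rw [h0, mul_zero] at h1
    have hbc : algebraMap F E (b * c) = algebraMap F E (d * a) := by
      rw [map_mul, map_mul]
      linear_combination (-(algebraMap F E c)) * h1 + (algebraMap F E d) * h0
    have hbc' : b * c = d * a := (algebraMap F E).injective hbc
    exact habcd (by linear_combination -hbc')
  -- Part 1 : adjoin β = ⊤
  have hαval : α = (algebraMap F E b - algebraMap F E d * β)
      / (algebraMap F E c * β - algebraMap F E a) := by
    rw [eq_div_iff hcβa]; linear_combination h1
  have hαmem : α ∈ F⟮β⟯ := by
    rw [hαval]
    have hβmem : β ∈ F⟮β⟯ := IntermediateField.mem_adjoin_simple_self F β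
    exact div_mem (sub_mem (IntermediateField.algebraMap_mem _ _)
        (mul_mem (IntermediateField.algebraMap_mem _ _) hβmem))
      (sub_mem (mul_mem (IntermediateField.algebraMap_mem _ _) hβmem)
        (IntermediateField.algebraMap_mem _ _))
  have h2 : Algebra.adjoin F {α} ≤ (F⟮β⟯).toSubalgebra :=
    Algebra.adjoin_le (Set.singleton_subset_iff.mpr hαmem)
  have h3 : (F⟮β⟯).toSubalgebra = ⊤ := le_antisymm le_top (hα ▸ h2)
  have hint : IsIntegral F β := Algebra.IsIntegral.isIntegral β
  have hadjβ : Algebra.adjoin F {β} = ⊤ := by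
    rw [← IntermediateField.adjoin_simple_toSubalgebra_of_isAlgebraic hint.isAlgebraic, h3]
  refine ⟨hadjβ, ?_⟩
  -- Part 2 : counting
  have main : ∀ W : Submodule F E,
      ((⨆ i : Fin n, α ^ (i : ℕ) • W) = ⊤ ↔ (⨆ i : Fin n, β ^ (i : ℕ) • W) = ⊤) := by
    intro W
    by_cases hc : c = 0
    · have hd : d ≠ 0 := fun h => hden (by rw [hc, h]; simp)
      have ha : a ≠ 0 := fun h => habcd (by rw [hc, h]; ring)
      have hd' : algebraMap F E d ≠ 0 := by
        simpa using (algebraMap F E).injective.ne hd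
      have hβ' : β = algebraMap F E (a / d) * α + algebraMap F E (b / d) := by
        rw [hβ, hc, map_div₀, map_div₀]
        field_simp
        simp [hd']
      rw [hβ', iSup_affine_eq n α W (a / d) (b / d) (div_ne_zero ha hd)]
    · set γ := algebraMap F E c * α + algebraMap F E d with hγdef
      have hγ : γ ≠ 0 := hden
      have hc' : algebraMap F E c ≠ 0 := by
        simpa using (algebraMap F E).injective.ne hc
      have e1 : (⨆ i : Fin n, γ ^ (i : ℕ) • W) = ⨆ i : Fin n, α ^ (i : ℕ) • W :=
        iSup_affine_eq n α W c d hc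
      have e2 := iSup_inv_top_iff (F := F) n hγ W
      have hu0 : (b * c - a * d) / c ≠ 0 :=
        div_ne_zero (fun h => habcd (by linear_combination -h)) hc
      have hβ' : β = algebraMap F E ((b * c - a * d) / c) * γ⁻¹
          + algebraMap F E (a / c) := by
        rw [hβ, map_div₀, map_div₀, map_sub, map_mul, map_mul, hγdef]
        have hX : α * algebraMap F E c + algebraMap F E d ≠ 0 := by rw [mul_comm]; exact hγ
        field_simp
        ring
      have e3 : (⨆ i : Fin n, β ^ (i : ℕ) • W)
          = ⨆ i : Fin n, (γ⁻¹) ^ (i : ℕ) • W := by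
        rw [hβ']
        exact iSup_affine_eq n γ⁻¹ W _ _ hu0
      rw [← e1, e2, e3]
  refine Nat.card_congr (Equiv.subtypeEquivRight ?_)
  intro W
  constructor
  · rintro ⟨hW, hs⟩
    exact ⟨hW, (isSplitting_iff_iSup_eq_top hdim hβ0 hW).mpr
      ((main W).mp ((isSplitting_iff_iSup_eq_top hdim hα0 hW).mp hs))⟩
  · rintro ⟨hW, hs⟩
    exact ⟨hW, (isSplitting_iff_iSup_eq_top hdim hα0 hW).mpr
      ((main W).mpr ((isSplitting_iff_iSup_eq_top hdim hβ0 hW).mp hs))⟩
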